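/- Let F be the free group on x_1, …, x_{2g}, γ and let f_* be an endomorphism of the subgroup ⟨x_1,…,x_{2g}⟩ such that f_*([x_1,x_2]⋯[x_{2g−1},x_{2g}]) = q ([x_1,x_2]⋯[x_{2g−1},x_{2g}]) q⁻¹ for some q ∈ ⟨x_1,…,x_{2g}⟩. Define r_i = γ f_*(x_i) γ⁻¹ x_i⁻¹ for i ≤ 2g, r_{2g+1} = [x_1,x_2]⋯[x_{2g−1},x_{2g}], w_i = Π_{j=1}^i [x_{2j−1},x_{2j}], and W_i = w_{i−1} r_{2i−1} w_{i−1}⁻¹ · (w_{i−1}x_{2i−1}) r_{2i} (w_{i−1}x_{2i−1})⁻¹ · (w_i x_{2i}) r_{2i−1}⁻¹ (w_i x_{2i})⁻¹ · w_i r_{2i}⁻¹ w_i⁻¹. Then (Π_{i=1}^g W_i) · r_{2g+1} · (γ q r_{2g+1}⁻¹ q⁻¹ γ⁻¹) = 1 in F. -/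

import Mathlib

open scoped commutatorElement

/-- The word `W = (Π_{i=1}^g W_i) · r_{2g+1} · (γ q r_{2g+1}⁻¹ q⁻¹ γ⁻¹)` associated with a
mapping torus of a genus-`g` surface diffeomorphism evaluates to `1` in the free group `F`
on `x_1, …, x_{2g}, γ`, where `r_i = γ f_*(x_i) γ⁻¹ x_i⁻¹`, `r_{2g+1} = [x_1,x_2]⋯[x_{2g−1},x_{2g}]`,
`w_i = Π_{j=1}^i [x_{2j−1},x_{2j}]`, and `f_*` satisfies
`f_*([x_1,x_2]⋯[x_{2g−1},x_{2g}]) = q ([x_1,x_2]⋯[x_{2g−1},x_{2g}]) q⁻¹`.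
(Indices are 0-based here: `x_{2i-1}` is `x (2*(i-1))`.) -/
theorem mapping_torus_identity (g : ℕ)
    (x : ℕ → FreeGroup (Fin (2*g) ⊕ Unit))
    (hx : ∀ (n : ℕ) (h : n < 2*g), x n = FreeGroup.of (Sum.inl ⟨n, h⟩))
    (γ : FreeGroup (Fin (2*g) ⊕ Unit))
    (hγ : γ = FreeGroup.of (Sum.inr ()))
    (f : ℕ → FreeGroup (Fin (2*g) ⊕ Unit))
    (hf : ∀ n, n < 2*g →
      f n ∈ Subgroup.closure (Set.range fun j : Fin (2*g) => FreeGroup.of (Sum.inl j)))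
    (q : FreeGroup (Fin (2*g) ⊕ Unit))
    (hq : q ∈ Subgroup.closure (Set.range fun j : Fin (2*g) => FreeGroup.of (Sum.inl j)))
    (hconj : ((List.range g).map fun j => ⁅f (2*j), f (2*j+1)⁆).prod
      = q * (((List.range g).map fun j => ⁅x (2*j), x (2*j+1)⁆).prod) * q⁻¹)
    (r : ℕ → FreeGroup (Fin (2*g) ⊕ Unit))
    (hr : ∀ n, r n = γ * f n * γ⁻¹ * (x n)⁻¹)
    (w : ℕ → FreeGroup (Fin (2*g) ⊕ Unit))
    (hw : ∀ i, w i = ((List.range i).map fun j => ⁅x (2*j), x (2*j+1)⁆).prod)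
    (W : ℕ → FreeGroup (Fin (2*g) ⊕ Unit))
    (hW : ∀ i, W i =
      w (i-1) * r (2*(i-1)) * (w (i-1))⁻¹
      * ((w (i-1) * x (2*(i-1))) * r (2*(i-1)+1) * (w (i-1) * x (2*(i-1)))⁻¹)
      * ((w i * x (2*(i-1)+1)) * (r (2*(i-1)))⁻¹ * (w i * x (2*(i-1)+1))⁻¹)
      * (w i * (r (2*(i-1)+1))⁻¹ * (w i)⁻¹)) :
    ((List.range g).map fun k => W (k+1)).prod * (w g)
      * (γ * q * (w g)⁻¹ * q⁻¹ * γ⁻¹) = 1 := by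
  have hwsucc : ∀ k, w (k+1) = w k * ⁅x (2*k), x (2*k+1)⁆ := by
    intro k
    rw [hw, hw, List.range_succ, List.map_append, List.prod_append]
    simp
  have hWk : ∀ k, W (k+1) = w k * (γ * ⁅f (2*k), f (2*k+1)⁆ * γ⁻¹) * (w (k+1))⁻¹ := by
    intro k
    rw [hW, hwsucc k]
    simp only [Nat.add_sub_cancel]
    rw [hr, hr]
    simp only [commutatorElement_def]
    group
  have hpre : ∀ k, ((List.range k).map fun j => W (j+1)).prod
      = γ * ((List.range k).map fun j => ⁅f (2*j), f (2*j+1)⁆).prod * γ⁻¹ * (w k)⁻¹ := by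
    intro k
    induction k with
    | zero => simp [hw 0]
    | succ n ih =>
      rw [List.range_succ, List.map_append, List.prod_append,
          List.map_append, List.prod_append, ih]
      simp only [List.map_cons, List.map_nil, List.prod_cons, List.prod_nil]
      rw [hWk n]
      group
  rw [hpre g, hconj, ← hw g]
  group
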